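/- Let A be a commutative associative algebra over a field of characteristic zero and p : A × A → A a skew-symmetric bilinear map satisfying the Hochschild cocycle condition a·p(b,c) − p(a·b, c) + p(a, b·c) − p(a,b)·c = 0 for all a,b,c. Then p is a derivation in each argument: p(a·b, c) = a·p(b,c) + b·p(a,c) for all a,b,c ∈ A. -/
import Mathlib


/-- a skew-symmetric Hochschild 2-cocycle on a commutative algebra
over a field of characteristic zero is a derivation in each argument. -/
theorem skew_cocycle_is_biderivation
    {k A : Type*} [Field k] [CharZero k] [CommRing A] [Algebra k A]
    (p : A →ₗ[k] A →ₗ[k] A)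
    (hskew : ∀ a b : A, p a b = - p b a)
    (hcocycle : ∀ a b c : A, a * p b c - p (a * b) c + p a (b * c) - p a b * c = 0) :
    ∀ a b c : A, p (a * b) c = a * p b c + b * p a c := by
  intro a b c
  have h1 := hcocycle a b c
  have h2 := hcocycle b a c
  have h3 := hcocycle a c b
  rw [mul_comm b a, hskew b a] at h2
  rw [mul_comm c b, hskew c b, hskew (a * c) b] at h3
  have key : p (a * b) c + p (a * b) c
      = (a * p b c + b * p a c) + (a * p b c + b * p a c) := by
    linear_combination h3 - h1 - h2
  have key2 : (2 : k) • p (a * b) c = (2 : k) • (a * p b c + b * p a c) := by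
    rw [two_smul, two_smul]; exact key
  exact smul_right_injective A (two_ne_zero) key2
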